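/- Let G be a finite tree, let p ≥ 2 and d ≥ 1 be integers, and let H be a finite family of nonempty subsets of the vertex set of G, each inducing a subgraph of G with at most d connected components, with |H| ≥ p. If H satisfies the (p,p) property, then the fractional covering number satisfies τ*(H) < (p·d)^{1/(p-1)} + 1. -/

import Mathlib

open SimpleGraph Finset
open scoped Classical

/-- A finite family `H` of vertex sets satisfies the `(p,q)` property if among
every `p` distinct members of `H` some `q` have a vertex in common. -/
def VertexPQProperty {V : Type*} (H : Finset (Set V)) (p q : ℕ) : Prop :=
  ∀ S ⊆ H, S.card = p → ∃ T ⊆ S, T.card = q ∧ (⋂ h ∈ T, (h : Set V)).Nonempty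

/-- The covering number `τ(H)`: the minimum cardinality of a set of vertices
meeting every member of `H`. -/
noncomputable def vertexCoverNum {V : Type*} (H : Finset (Set V)) : ℕ :=
  sInf { n : ℕ | ∃ C : Finset V, C.card = n ∧ ∀ h ∈ H, ∃ v ∈ C, v ∈ h }

/-- The fractional covering number `τ*(H)`: the infimum of total weights of
fractional covers of `H`. -/
noncomputable def vertexFracCoverNum {V : Type*} [Fintype V] (H : Finset (Set V)) : ℝ :=
  sInf { t : ℝ | ∃ w : V → ℝ, (∀ v, 0 ≤ w v) ∧
    (∀ h ∈ H, 1 ≤ ∑ v, Set.indicator h w v) ∧ t = ∑ v, w v }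

section TreeTop
variable {V : Type*} {G : SimpleGraph V}

noncomputable def pathTo (hG : G.IsTree) (r v : V) : G.Path v r :=
  (hG.isConnected.preconnected v r).some.toPath

/-- Index of the last vertex of an initial segment of `pathTo v` staying inside `h`. -/
noncomputable def stopIdx (hG : G.IsTree) (r : V) (h : Set V) (v : V) : ℕ :=
  Nat.findGreatest (fun j => ∀ k ≤ j, (pathTo hG r v : G.Walk v r).getVert k ∈ h)
    (pathTo hG r v : G.Walk v r).length

/-- The top of the component of `v` in `h`: last vertex of the maximal initial
segment of the path from `v` to the root staying in `h`. -/
noncomputable def vtop (hG : G.IsTree) (r : V) (h : Set V) (v : V) : V :=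
  (pathTo hG r v : G.Walk v r).getVert (stopIdx hG r h v)

lemma stopIdx_le (hG : G.IsTree) (r : V) (h : Set V) (v : V) :
    stopIdx hG r h v ≤ (pathTo hG r v : G.Walk v r).length :=
  Nat.findGreatest_le _

lemma le_stopIdx (hG : G.IsTree) (r : V) {h : Set V} {v : V} {j : ℕ}
    (hj : j ≤ (pathTo hG r v : G.Walk v r).length)
    (hpre : ∀ k ≤ j, (pathTo hG r v : G.Walk v r).getVert k ∈ h) :
    j ≤ stopIdx hG r h v :=
  Nat.le_findGreatest hj hpre

lemma prefix_mem (hG : G.IsTree) (r : V) {h : Set V} {v : V} (hv : v ∈ h) :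
    ∀ k ≤ stopIdx hG r h v, (pathTo hG r v : G.Walk v r).getVert k ∈ h := by
  have := Nat.findGreatest_spec
    (P := fun j => ∀ k ≤ j, (pathTo hG r v : G.Walk v r).getVert k ∈ h)
    (n := (pathTo hG r v : G.Walk v r).length) (m := 0) (Nat.zero_le _) ?_
  · exact this
  · intro k hk
    simp only [Nat.le_zero] at hk
    subst hk
    simpa [Walk.getVert_zero] using hv

lemma vtop_mem (hG : G.IsTree) (r : V) {h : Set V} {v : V} (hv : v ∈ h) :
    vtop hG r h v ∈ h :=
  prefix_mem hG r hv _ le_rfl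

lemma pathTo_cons (hG : G.IsTree) (r : V) {u u' : V} (hadj : G.Adj u u') :
    (pathTo hG r u : G.Walk u r) = Walk.cons hadj (pathTo hG r u') ∨
    (pathTo hG r u' : G.Walk u' r) = Walk.cons hadj.symm (pathTo hG r u) := by
  by_cases hu : u ∈ (pathTo hG r u' : G.Walk u' r).support
  · right
    have hQ : ((pathTo hG r u' : G.Walk u' r).dropUntil u hu).IsPath :=
      (pathTo hG r u').2.dropUntil hu
    have hT : ((pathTo hG r u' : G.Walk u' r).takeUntil u hu).IsPath :=
      (pathTo hG r u').2.takeUntil hu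
    have hE : (Walk.cons hadj.symm Walk.nil : G.Walk u' u).IsPath := by
      simp [Walk.isPath_iff_eq_nil, hadj.ne']
    have hTE : ((pathTo hG r u' : G.Walk u' r).takeUntil u hu) =
        (Walk.cons hadj.symm Walk.nil : G.Walk u' u) := by
      have := hG.IsAcyclic.path_unique ⟨_, hT⟩ ⟨_, hE⟩
      exact congrArg Subtype.val this
    have hQP : ((pathTo hG r u' : G.Walk u' r).dropUntil u hu) = (pathTo hG r u : G.Walk u r) := by
      have := hG.IsAcyclic.path_unique ⟨_, hQ⟩ (pathTo hG r u)
      exact congrArg Subtype.val this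
    calc (pathTo hG r u' : G.Walk u' r)
        = ((pathTo hG r u' : G.Walk u' r).takeUntil u hu).append
            ((pathTo hG r u' : G.Walk u' r).dropUntil u hu) := (Walk.take_spec _ hu).symm
      _ = Walk.cons hadj.symm (pathTo hG r u) := by rw [hTE, hQP]; simp
  · left
    have hP : (Walk.cons hadj (pathTo hG r u' : G.Walk u' r)).IsPath :=
      (pathTo hG r u').2.cons hu
    have := hG.IsAcyclic.path_unique (pathTo hG r u) ⟨_, hP⟩
    exact congrArg Subtype.val this


lemma vtop_eq_of_cons (hG : G.IsTree) (r : V) {u u' : V} (hadj : G.Adj u u')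
    (hcons : (pathTo hG r u : G.Walk u r) = Walk.cons hadj (pathTo hG r u'))
    {h : Set V} (hu : u ∈ h) (hu' : u' ∈ h) :
    vtop hG r h u = vtop hG r h u' := by
  set P : G.Walk u' r := (pathTo hG r u' : G.Walk u' r) with hP
  have hlen : (pathTo hG r u : G.Walk u r).length = P.length + 1 := by
    rw [hcons]; simp
  have hgv : ∀ k, (pathTo hG r u : G.Walk u r).getVert (k+1) = P.getVert k := by
    intro k; rw [hcons]; exact Walk.getVert_cons_succ _ _
  have hgv0 : (pathTo hG r u : G.Walk u r).getVert 0 = u := Walk.getVert_zero _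
  have key : stopIdx hG r h u = stopIdx hG r h u' + 1 := by
    apply le_antisymm
    · -- ≤
      by_contra hlt
      push_neg at hlt
      have h2 : stopIdx hG r h u' + 2 ≤ stopIdx hG r h u := hlt
      have hple : stopIdx hG r h u - 1 ≤ P.length := by
        have := stopIdx_le hG r h u
        omega
      have hpre : ∀ k ≤ stopIdx hG r h u - 1, P.getVert k ∈ h := by
        intro k hk
        have : k + 1 ≤ stopIdx hG r h u := by omega
        have := prefix_mem hG r hu (k+1) this
        rwa [hgv] at this
      have hfg : stopIdx hG r h u - 1 ≤ stopIdx hG r h u' := le_stopIdx hG r hple hpre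
      omega
    · -- ≥
      apply le_stopIdx hG r
      · rw [hlen]
        exact Nat.succ_le_succ (stopIdx_le hG r h u')
      · intro k hk
        match k with
        | 0 => simpa [hgv0] using hu
        | (k+1) =>
          rw [hgv]
          exact prefix_mem hG r hu' k (by omega)
  rw [vtop, vtop, key, hgv]

lemma vtop_adj (hG : G.IsTree) (r : V) {h : Set V} {u u' : V} (hadj : G.Adj u u')
    (hu : u ∈ h) (hu' : u' ∈ h) : vtop hG r h u = vtop hG r h u' := by
  rcases pathTo_cons hG r hadj with hc | hc
  · exact vtop_eq_of_cons hG r hadj hc hu hu'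
  · exact (vtop_eq_of_cons hG r hadj.symm hc hu' hu).symm


lemma vtop_reachable (hG : G.IsTree) (r : V) {h : Set V} {a b : ↥h}
    (hr : (G.induce h).Reachable a b) : vtop hG r h a.1 = vtop hG r h b.1 := by
  obtain ⟨w⟩ := hr
  induction w with
  | nil => rfl
  | cons hadj p ih =>
    rename_i x y _
    have hxy : G.Adj x.1 y.1 := hadj
    exact (vtop_adj hG r hxy x.2 y.2).trans ih

variable [Fintype V]

lemma card_vtops_le (hG : G.IsTree) (r : V) {h : Set V} {d : ℕ}
    (hc : Nat.card (G.induce h).ConnectedComponent ≤ d) :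
    (h.toFinset.image (vtop hG r h)).card ≤ d := by
  classical
  set T := h.toFinset.image (vtop hG r h) with hT
  have hw : ∀ t ∈ T, ∃ v, ∃ hv : v ∈ h, vtop hG r h v = t := by
    intro t ht
    rw [hT, Finset.mem_image] at ht
    obtain ⟨v, hv, hvt⟩ := ht
    exact ⟨v, Set.mem_toFinset.mp hv, hvt⟩
  choose g hg1 hg2 using hw
  have hinj : Function.Injective (fun t : {t // t ∈ T} =>
      (G.induce h).connectedComponentMk ⟨g t.1 t.2, hg1 t.1 t.2⟩) := by
    intro t1 t2 he
    simp only [ConnectedComponent.eq] at he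
    have := vtop_reachable hG r he
    simp only at this
    rw [hg2 t1.1 t1.2, hg2 t2.1 t2.2] at this
    exact Subtype.ext this
  calc T.card = Nat.card {t // t ∈ T} := by
        simp [Nat.card_eq_fintype_card, Fintype.card_coe]
    _ ≤ Nat.card (G.induce h).ConnectedComponent := Nat.card_le_card_of_injective _ hinj
    _ ≤ d := hc

end TreeTop



section Comb
variable {V : Type*} {G : SimpleGraph V}

lemma iInter_nonempty_of_pq {H : Finset (Set V)} {p : ℕ} (hp : 1 ≤ p)
    (hcard : p ≤ H.card) (hprop : VertexPQProperty H p p)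
    (f : Fin p → Set V) (hf : ∀ i, f i ∈ H) : (⋂ i, f i).Nonempty := by
  classical
  set S₀ : Finset (Set V) := Finset.image f Finset.univ with hS₀
  have hS₀H : S₀ ⊆ H := by
    intro s hs
    rw [hS₀, Finset.mem_image] at hs
    obtain ⟨i, _, rfl⟩ := hs
    exact hf i
  have hS₀c : S₀.card ≤ p := by
    calc S₀.card ≤ (Finset.univ : Finset (Fin p)).card := Finset.card_image_le
      _ = p := by simp
  obtain ⟨S, hS₀S, hSH, hSc⟩ := Finset.exists_subsuperset_card_eq hS₀H hS₀c hcard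
  obtain ⟨T, hTS, hTc, ⟨x, hx⟩⟩ := hprop S hSH hSc
  have hTS' : T = S := Finset.eq_of_subset_of_card_le hTS (by rw [hTc, hSc])
  subst hTS'
  refine ⟨x, Set.mem_iInter.mpr fun i => ?_⟩
  have : f i ∈ T := hS₀S (by rw [hS₀]; exact Finset.mem_image_of_mem f (Finset.mem_univ i))
  simpa using Set.mem_iInter₂.mp hx (f i) this

lemma exists_common_vtop [Fintype V] (hG : G.IsTree) (r : V) {p : ℕ} (hp : 0 < p)
    (f : Fin p → Set V) {v : V} (hv : ∀ i, v ∈ f i) :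
    ∃ i₀ : Fin p, ∃ t : V,
      t ∈ (f i₀).toFinset.image (vtop hG r (f i₀)) ∧ ∀ i, t ∈ f i := by
  classical
  obtain ⟨i₀, -, hmin⟩ := Finset.exists_min_image Finset.univ
    (fun i => stopIdx hG r (f i) v) ⟨⟨0, hp⟩, Finset.mem_univ _⟩
  refine ⟨i₀, vtop hG r (f i₀) v, ?_, ?_⟩
  · exact Finset.mem_image_of_mem _ (Set.mem_toFinset.mpr (hv i₀))
  · intro i
    exact prefix_mem hG r (hv i) (stopIdx hG r (f i₀) v) (hmin i (Finset.mem_univ i))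

end Comb

section Matching
variable {V : Type*} [Fintype V] {G : SimpleGraph V}

lemma matching_le (hG : G.IsTree) (r : V) {p d : ℕ} (hp : 2 ≤ p) (hd : 1 ≤ d)
    {H : Finset (Set V)}
    (hcomp : ∀ h ∈ H, Nat.card (G.induce h).ConnectedComponent ≤ d)
    (hcard : p ≤ H.card) (hprop : VertexPQProperty H p p)
    (y : Set V → ℝ) (hy : ∀ h, 0 ≤ y h)
    (hz : ∀ v : V, ∑ h ∈ H.filter (fun h => v ∈ h), y h ≤ 1) :
    ∑ h ∈ H, y h ≤ ((p:ℝ) * d) ^ (1 / ((p:ℝ) - 1)) := by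
  have hY0 : 0 ≤ ∑ h ∈ H, y h := Finset.sum_nonneg fun h _ => hy h
  have key : (∑ h ∈ H, y h) ^ p ≤ (p : ℝ) * d * (∑ h ∈ H, y h) := by
    set Y := ∑ h ∈ H, y h with hY
    set z : V → ℝ := fun t => ∑ h ∈ H.filter (fun h => t ∈ h), y h with hzdef
    set a : V → ℝ := fun t =>
      ∑ h ∈ H.filter (fun h => t ∈ h ∧ t ∈ h.toFinset.image (vtop hG r h)), y h with hadef
    have hz0 : ∀ t, 0 ≤ z t := fun t => Finset.sum_nonneg fun h _ => hy h
    have hz1 : ∀ t, z t ≤ 1 := hz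
    have ha0 : ∀ t, 0 ≤ a t := fun t => Finset.sum_nonneg fun h _ => hy h
    set A := Fintype.piFinset (fun _ : Fin p => H) with hA
    set g : (Fin p → Set V) → ℝ := fun f => ∏ i, y (f i) with hgdef
    have hg0 : ∀ f, 0 ≤ g f := fun f => Finset.prod_nonneg fun i _ => hy (f i)
    set Q : Fin p × V → (Fin p → Set V) → Prop := fun c f =>
      (c.2 ∈ (f c.1).toFinset.image (vtop hG r (f c.1))) ∧ ∀ i, c.2 ∈ f i with hQdef
    -- Step A
    have stepA : Y ^ p = ∑ f ∈ A, g f := by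
      have h1 : Y ^ p = ∏ _i : Fin p, Y := by
        rw [Finset.prod_const, Finset.card_univ, Fintype.card_fin]
      rw [h1, hY, Finset.prod_univ_sum]
    -- Step B : existence of a witness for each f ∈ A
    have stepB : ∀ f ∈ A, ∃ c : Fin p × V, Q c f := by
      intro f hf
      have hfH : ∀ i, f i ∈ H := by
        intro i
        exact (Fintype.mem_piFinset.mp hf) i
      obtain ⟨v, hv⟩ := iInter_nonempty_of_pq (by omega) hcard hprop f hfH
      have hv' : ∀ i, v ∈ f i := Set.mem_iInter.mp hv
      obtain ⟨i₀, t, ht1, ht2⟩ := exists_common_vtop hG r (by omega) f hv'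
      exact ⟨(i₀, t), ht1, ht2⟩
    -- Step B' : union bound
    have stepB' : ∑ f ∈ A, g f ≤ ∑ c : Fin p × V, ∑ f ∈ A.filter (Q c), g f := by
      have h1 : ∀ f ∈ A, g f ≤ ∑ c : Fin p × V, if Q c f then g f else 0 := by
        intro f hf
        obtain ⟨c₀, hc₀⟩ := stepB f hf
        have := Finset.single_le_sum (f := fun c => if Q c f then g f else 0)
          (fun c _ => by split_ifs; exacts [hg0 f, le_rfl]) (Finset.mem_univ c₀)
        simpa only [if_pos hc₀] using this
      calc ∑ f ∈ A, g f ≤ ∑ f ∈ A, ∑ c : Fin p × V, if Q c f then g f else 0 :=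
            Finset.sum_le_sum h1
        _ = ∑ c : Fin p × V, ∑ f ∈ A, if Q c f then g f else 0 := Finset.sum_comm
        _ = ∑ c : Fin p × V, ∑ f ∈ A.filter (Q c), g f := by
            refine Finset.sum_congr rfl fun c _ => ?_
            rw [Finset.sum_filter]
    -- Step C : each fiber is bounded
    have stepC : ∀ c : Fin p × V, ∑ f ∈ A.filter (Q c), g f ≤ a c.2 := by
      rintro ⟨i₀, t⟩
      set B := Fintype.piFinset (fun i : Fin p =>
        if i = i₀ then H.filter (fun h => t ∈ h ∧ t ∈ h.toFinset.image (vtop hG r h))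
        else H.filter (fun h => t ∈ h)) with hB
      have hsub : A.filter (Q (i₀, t)) ⊆ B := by
        intro f hf
        rw [Finset.mem_filter] at hf
        obtain ⟨hfA, hQ1, hQ2⟩ := hf
        have hfH : ∀ i, f i ∈ H := fun i => (Fintype.mem_piFinset.mp hfA) i
        rw [hB, Fintype.mem_piFinset]
        intro i
        by_cases hi : i = i₀
        · subst hi
          rw [if_pos rfl, Finset.mem_filter]
          exact ⟨hfH i, hQ2 i, hQ1⟩
        · rw [if_neg hi, Finset.mem_filter]
          exact ⟨hfH i, hQ2 i⟩
      have h1 : ∑ f ∈ A.filter (Q (i₀, t)), g f ≤ ∑ f ∈ B, g f :=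
        Finset.sum_le_sum_of_subset_of_nonneg hsub (fun f _ _ => hg0 f)
      have h2 : ∑ f ∈ B, g f = a t * z t ^ (p - 1) := by
        rw [hB, ← Finset.prod_univ_sum]
        have h3 : ∀ i : Fin p,
            (∑ h ∈ (if i = i₀ then H.filter (fun h => t ∈ h ∧ t ∈ h.toFinset.image (vtop hG r h))
              else H.filter (fun h => t ∈ h)), y h) = if i = i₀ then a t else z t := by
          intro i
          by_cases hi : i = i₀ <;> simp [hi, hadef, hzdef]
        rw [Finset.prod_congr rfl (fun i _ => h3 i)]
        rw [← Finset.mul_prod_erase Finset.univ _ (Finset.mem_univ i₀), if_pos rfl]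
        congr 1
        rw [Finset.prod_congr rfl (fun i hi => if_neg (Finset.ne_of_mem_erase hi)),
          Finset.prod_const, Finset.card_erase_of_mem (Finset.mem_univ i₀),
          Finset.card_univ, Fintype.card_fin]
      have h4 : a t * z t ^ (p - 1) ≤ a t * 1 := by
        apply mul_le_mul_of_nonneg_left _ (ha0 t)
        exact pow_le_one₀ (hz0 t) (hz1 t)
      calc ∑ f ∈ A.filter (Q (i₀, t)), g f ≤ ∑ f ∈ B, g f := h1
        _ = a t * z t ^ (p - 1) := h2
        _ ≤ a t * 1 := h4
        _ = a t := mul_one _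
    -- Step D
    have stepD : ∑ c : Fin p × V, a c.2 = (p : ℝ) * ∑ t : V, a t := by
      rw [Fintype.sum_prod_type]
      simp only
      rw [Finset.sum_const, Finset.card_univ, Fintype.card_fin, nsmul_eq_mul]
    -- Step E
    have stepE : ∑ t : V, a t ≤ (d : ℝ) * Y := by
      have h1 : ∑ t : V, a t = ∑ h ∈ H,
          ((Finset.univ.filter (fun t : V => t ∈ h ∧ t ∈ h.toFinset.image (vtop hG r h))).card : ℝ)
            * y h := by
        rw [hadef]
        simp only [Finset.sum_filter]
        rw [Finset.sum_comm]
        refine Finset.sum_congr rfl fun h _ => ?_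
        rw [← Finset.sum_filter, Finset.sum_const, nsmul_eq_mul]
      have h2 : ∀ h ∈ H,
          ((Finset.univ.filter (fun t : V => t ∈ h ∧ t ∈ h.toFinset.image (vtop hG r h))).card : ℝ)
            ≤ d := by
        intro h hH
        have hsub : Finset.univ.filter (fun t : V => t ∈ h ∧ t ∈ h.toFinset.image (vtop hG r h))
            ⊆ h.toFinset.image (vtop hG r h) := by
          intro t ht
          rw [Finset.mem_filter] at ht
          exact ht.2.2
        exact_mod_cast (Finset.card_le_card hsub).trans (card_vtops_le hG r (hcomp h hH))
      calc ∑ t : V, a t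
          = ∑ h ∈ H, ((Finset.univ.filter (fun t : V =>
              t ∈ h ∧ t ∈ h.toFinset.image (vtop hG r h))).card : ℝ) * y h := h1
        _ ≤ ∑ h ∈ H, (d : ℝ) * y h :=
            Finset.sum_le_sum fun h hH => mul_le_mul_of_nonneg_right (h2 h hH) (hy h)
        _ = (d : ℝ) * Y := by rw [← Finset.mul_sum]
    -- combine
    calc Y ^ p = ∑ f ∈ A, g f := stepA
      _ ≤ ∑ c : Fin p × V, ∑ f ∈ A.filter (Q c), g f := stepB'
      _ ≤ ∑ c : Fin p × V, a c.2 := Finset.sum_le_sum fun c _ => stepC c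
      _ = (p : ℝ) * ∑ t : V, a t := stepD
      _ ≤ (p : ℝ) * ((d : ℝ) * Y) := by
          apply mul_le_mul_of_nonneg_left stepE (by positivity)
      _ = (p : ℝ) * d * Y := by ring
  set Y := ∑ h ∈ H, y h with hYdef
  have hp1 : (1:ℝ) ≤ (p:ℝ) - 1 := by
    have : (2:ℝ) ≤ (p:ℝ) := by exact_mod_cast hp
    linarith
  have hpd1 : (1:ℝ) ≤ (p:ℝ) * d := by
    have h1 : (2:ℝ) ≤ (p:ℝ) := by exact_mod_cast hp
    have h2 : (1:ℝ) ≤ (d:ℝ) := by exact_mod_cast hd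
    nlinarith
  have hexp : (0:ℝ) ≤ 1 / ((p:ℝ) - 1) := by positivity
  have hx1 : (1:ℝ) ≤ ((p:ℝ) * d) ^ (1 / ((p:ℝ) - 1)) := by
    have := Real.rpow_le_rpow zero_le_one hpd1 hexp
    rwa [Real.one_rpow] at this
  rcases le_or_gt Y 1 with hY1 | hY1
  · linarith
  · have hYpos : 0 < Y := by linarith
    have hstep : Y ^ (p - 1) ≤ (p:ℝ) * d := by
      have hpow : Y ^ (p - 1) * Y = Y ^ p := by
        rw [← pow_succ]
        congr 1
        omega
      have := key
      rw [← hpow] at this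
      exact le_of_mul_le_mul_right this hYpos
    have hcast : ((p - 1 : ℕ) : ℝ) = (p:ℝ) - 1 := by
      have := Nat.cast_sub (by omega : 1 ≤ p) (R := ℝ)
      simpa using this
    have hYrw : Y = (Y ^ (p - 1 : ℕ)) ^ (1 / ((p:ℝ) - 1)) := by
      rw [← Real.rpow_natCast Y (p-1), ← Real.rpow_mul hY0, hcast]
      rw [mul_one_div, div_self (by linarith : (p:ℝ) - 1 ≠ 0), Real.rpow_one]
    rw [hYrw]
    exact Real.rpow_le_rpow (by positivity) hstep hexp


end Matching

section Sep
variable {V : Type*} [Fintype V]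

lemma hull_key {H : Finset (Set V)} (hHne : H.Nonempty) (v₀ : V) {x : ℝ} (hxpos : 0 < x)
    (hmatch : ∀ y : Set V → ℝ, (∀ h, 0 ≤ y h) →
      (∀ v : V, ∑ h ∈ H.filter (fun h => v ∈ h), y h ≤ 1) → ∑ h ∈ H, y h ≤ x) :
    ∃ u ∈ convexHull ℝ (Set.range (fun (v : V) (hh : ↥H) => if v ∈ hh.1 then (1:ℝ) else 0)),
      ∀ hh : ↥H, 1/x ≤ u hh := by
  classical
  set aa : V → (↥H → ℝ) := fun v hh => if v ∈ hh.1 then (1:ℝ) else 0 with haa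
  by_contra hcon
  push_neg at hcon
  set s : Set (↥H → ℝ) := {u | ∀ hh : ↥H, 1/x ≤ u hh} with hs
  have hs_closed : IsClosed s := by
    have : s = ⋂ hh : ↥H, {u : ↥H → ℝ | 1/x ≤ u hh} := by
      ext u; simp [hs, Set.mem_iInter]
    rw [this]
    exact isClosed_iInter fun hh => isClosed_le continuous_const (continuous_apply hh)
  have hs_convex : Convex ℝ s := by
    intro u hu w hw α β hα hβ hαβ
    intro hh
    have h1 := hu hh
    have h2 := hw hh
    simp only [Pi.add_apply, Pi.smul_apply, smul_eq_mul]
    calc 1/x = α * (1/x) + β * (1/x) := by rw [← add_mul, hαβ, one_mul]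
      _ ≤ α * u hh + β * w hh :=
          add_le_add (mul_le_mul_of_nonneg_left h1 hα) (mul_le_mul_of_nonneg_left h2 hβ)
  have ht_compact : IsCompact (convexHull ℝ (Set.range aa)) :=
    (Set.finite_range aa).isCompact_convexHull ℝ
  have ht_convex : Convex ℝ (convexHull ℝ (Set.range aa)) := convex_convexHull ℝ _
  have hdisj : Disjoint s (convexHull ℝ (Set.range aa)) := by
    rw [Set.disjoint_left]
    intro u hu1 hu2
    obtain ⟨hh, hlt⟩ := hcon u hu2
    exact absurd (hu1 hh) (not_le.mpr hlt)
  obtain ⟨φ, α, β, hφs, hαβ, hφt⟩ :=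
    geometric_hahn_banach_closed_compact hs_convex hs_closed ht_convex ht_compact hdisj
  set yy : ↥H → ℝ := fun hh => φ (fun j => if hh = j then (1:ℝ) else 0) with hyy
  have hφ_eq : ∀ u : ↥H → ℝ, φ u = ∑ hh : ↥H, u hh * yy hh := by
    intro u
    have hu : u = ∑ hh : ↥H, u hh • (fun j => if hh = j then (1:ℝ) else 0) :=
      pi_eq_sum_univ u
    calc φ u = φ (∑ hh : ↥H, u hh • (fun j => if hh = j then (1:ℝ) else 0)) := by rw [← hu]
      _ = ∑ hh : ↥H, u hh * yy hh := by
          rw [map_sum]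
          exact Finset.sum_congr rfl fun hh _ => by rw [map_smul, smul_eq_mul, hyy]
  -- base point
  have hbase : (fun _ : ↥H => 1/x) ∈ s := fun hh => le_rfl
  have hbaseφ : φ (fun _ : ↥H => 1/x) < α := hφs _ hbase
  -- all coefficients nonpositive
  have hyneg : ∀ hh : ↥H, yy hh ≤ 0 := by
    intro hh₀
    by_contra hcon2
    push_neg at hcon2
    set C := φ (fun _ : ↥H => 1/x) with hC
    set M : ℝ := max 0 ((α - C) / yy hh₀) with hM
    have hM0 : 0 ≤ M := le_max_left _ _
    have hu : (fun j : ↥H => 1/x + M * (if hh₀ = j then (1:ℝ) else 0)) ∈ s := by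
      intro hh
      by_cases hj : hh₀ = hh <;> simp [hj] <;> nlinarith [le_of_eq (rfl : (1:ℝ)/x = 1/x)]
    have heval : φ (fun j : ↥H => 1/x + M * (if hh₀ = j then (1:ℝ) else 0)) = C + M * yy hh₀ := by
      have : (fun j : ↥H => 1/x + M * (if hh₀ = j then (1:ℝ) else 0)) =
          (fun _ : ↥H => 1/x) + M • (fun j => if hh₀ = j then (1:ℝ) else 0) := by
        funext j; simp only [Pi.add_apply, Pi.smul_apply, smul_eq_mul]
      rw [this, map_add, map_smul, smul_eq_mul, hC, hyy]
    have hlt := hφs _ hu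
    rw [heval] at hlt
    have hMge : (α - C) / yy hh₀ ≤ M := le_max_right _ _
    have : α - C ≤ M * yy hh₀ := by
      rw [div_le_iff₀ hcon2] at hMge
      linarith
    linarith
  -- build fractional matching contradicting hmatch
  set lam : ℝ := -β with hlam
  have hzv : ∀ v : V, ∑ hh : ↥H, (if v ∈ hh.1 then -yy hh else 0) < lam := by
    intro v
    have h1 : β < φ (aa v) := hφt _ (subset_convexHull ℝ _ (Set.mem_range_self v))
    rw [hφ_eq] at h1
    have h2 : ∑ hh : ↥H, aa v hh * yy hh = -∑ hh : ↥H, (if v ∈ hh.1 then -yy hh else 0) := by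
      rw [← Finset.sum_neg_distrib]
      refine Finset.sum_congr rfl fun hh _ => ?_
      by_cases hv : v ∈ hh.1 <;> simp [haa, hv]
    rw [h2] at h1
    linarith
  have hlampos : 0 < lam := by
    have h0 : 0 ≤ ∑ hh : ↥H, (if v₀ ∈ hh.1 then -yy hh else 0) :=
      Finset.sum_nonneg fun hh _ => by
        by_cases hv : v₀ ∈ hh.1 <;> simp [hv] <;> linarith [hyneg hh]
    exact lt_of_le_of_lt h0 (hzv v₀)
  have hYbig : x * lam < ∑ hh : ↥H, -yy hh := by
    have h1 : (1/x) * ∑ hh : ↥H, yy hh < α := by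
      have h0 := hbaseφ
      rw [hφ_eq] at h0
      rw [Finset.mul_sum]
      exact h0
    have h2 : ∑ hh : ↥H, yy hh < α * x := by
      have h3 := mul_lt_mul_of_pos_right h1 hxpos
      have h4 : (1/x) * (∑ hh : ↥H, yy hh) * x = ∑ hh : ↥H, yy hh := by
        field_simp
      rwa [h4] at h3
    have h3 : ∑ hh : ↥H, -yy hh = -∑ hh : ↥H, yy hh := by rw [Finset.sum_neg_distrib]
    rw [h3]
    nlinarith [mul_pos (sub_pos.mpr hαβ) hxpos, h2]
  -- the matching
  set yS : Set V → ℝ := fun h => if hh : h ∈ H then -yy ⟨h, hh⟩ / lam else 0 with hyS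
  have hy0 : ∀ h, 0 ≤ yS h := by
    intro h
    rw [hyS]
    by_cases hh : h ∈ H
    · simp only [dif_pos hh]
      exact div_nonneg (by linarith [hyneg ⟨h, hh⟩]) (le_of_lt hlampos)
    · simp [dif_neg hh]
  have hsum : ∑ h ∈ H, yS h = (∑ hh : ↥H, -yy hh) / lam := by
    rw [Finset.sum_div]
    rw [← Finset.sum_attach H (fun h => yS h)]
    rw [Finset.univ_eq_attach]
    refine Finset.sum_congr rfl fun hh _ => ?_
    rw [hyS]
    simp [dif_pos hh.2]
  have hconstr : ∀ v : V, ∑ h ∈ H.filter (fun h => v ∈ h), yS h ≤ 1 := by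
    intro v
    have h1 : ∑ h ∈ H.filter (fun h => v ∈ h), yS h
        = (∑ hh : ↥H, (if v ∈ hh.1 then -yy hh else 0)) / lam := by
      rw [Finset.sum_filter, Finset.sum_div, ← Finset.sum_attach H
        (fun h => if v ∈ h then yS h else 0), Finset.univ_eq_attach]
      refine Finset.sum_congr rfl fun hh _ => ?_
      by_cases hv : v ∈ hh.1
      · rw [if_pos hv, if_pos hv, hyS]
        simp [dif_pos hh.2]
      · rw [if_neg hv, if_neg hv, zero_div]
    rw [h1, div_le_one hlampos]
    exact le_of_lt (hzv v)
  have := hmatch yS hy0 hconstr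
  rw [hsum, div_le_iff₀ hlampos] at this
  nlinarith

end Sep

section Cover
variable {V : Type*} [Fintype V]

lemma frac_le_of_hull {H : Finset (Set V)} {x : ℝ} (hxpos : 0 < x)
    (key : ∃ u ∈ convexHull ℝ (Set.range (fun (v : V) (hh : ↥H) => if v ∈ hh.1 then (1:ℝ) else 0)),
      ∀ hh : ↥H, 1/x ≤ u hh) :
    vertexFracCoverNum H ≤ x := by
  classical
  set aa : V → (↥H → ℝ) := fun v hh => if v ∈ hh.1 then (1:ℝ) else 0 with haa
  obtain ⟨u, humem, hucov⟩ := key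
  rw [mem_convexHull_iff_exists_fintype] at humem
  obtain ⟨ι, _inst, w, zf, hw0, hw1, hzs, hzx⟩ := humem
  choose vf hvf using fun i => hzs i
  set wt : V → ℝ := fun v => x * ∑ i ∈ Finset.univ.filter (fun i => vf i = v), w i with hwt
  have hwt0 : ∀ v, 0 ≤ wt v := fun v =>
    mul_nonneg hxpos.le (Finset.sum_nonneg fun i _ => hw0 i)
  have htot : ∑ v, wt v = x := by
    rw [hwt, ← Finset.mul_sum,
      Finset.sum_fiberwise_of_maps_to (fun i _ => Finset.mem_univ (vf i)) w, hw1, mul_one]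
  have hcov : ∀ h ∈ H, 1 ≤ ∑ v, Set.indicator h wt v := by
    intro h hh
    have hu1 : 1/x ≤ u ⟨h, hh⟩ := hucov ⟨h, hh⟩
    have hui : u ⟨h, hh⟩ = ∑ i, w i * (if vf i ∈ h then 1 else 0) := by
      rw [← hzx]
      rw [Finset.sum_apply]
      refine Finset.sum_congr rfl fun i _ => ?_
      rw [Pi.smul_apply, smul_eq_mul]
      congr 1
      rw [← hvf i]
    have hsum : ∑ v, Set.indicator h wt v = x * ∑ i, w i * (if vf i ∈ h then 1 else 0) := by
      have e1 : ∀ v : V, Set.indicator h wt v =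
          x * ∑ i ∈ Finset.univ.filter (fun i => vf i = v), (if vf i ∈ h then w i else 0) := by
        intro v
        rw [Set.indicator_apply]
        by_cases hv : v ∈ h
        · rw [if_pos hv, hwt]
          simp only []
          have he : ∀ i ∈ Finset.univ.filter (fun i => vf i = v),
              w i = (if vf i ∈ h then w i else 0) := by
            intro i hi
            rw [Finset.mem_filter] at hi
            rw [if_pos (hi.2 ▸ hv)]
          rw [Finset.sum_congr rfl he]

        · rw [if_neg hv]
          have : ∀ i ∈ Finset.univ.filter (fun i => vf i = v),
              (if vf i ∈ h then w i else 0) = 0 := by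
            intro i hi
            rw [Finset.mem_filter] at hi
            rw [if_neg (hi.2 ▸ hv)]
          rw [Finset.sum_congr rfl this, Finset.sum_const, smul_zero, mul_zero]
      rw [Finset.sum_congr rfl (fun v _ => e1 v), ← Finset.mul_sum,
        Finset.sum_fiberwise_of_maps_to (fun i _ => Finset.mem_univ (vf i))]
      congr 1
      exact Finset.sum_congr rfl fun i _ => by rw [mul_ite, mul_one, mul_zero]
    rw [hsum]
    calc (1:ℝ) = x * (1/x) := by field_simp
      _ ≤ x * ∑ i, w i * (if vf i ∈ h then 1 else 0) := by
          apply mul_le_mul_of_nonneg_left _ hxpos.le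
          rw [← hui]; exact hu1
  have hmem : x ∈ { t : ℝ | ∃ w : V → ℝ, (∀ v, 0 ≤ w v) ∧
      (∀ h ∈ H, 1 ≤ ∑ v, Set.indicator h w v) ∧ t = ∑ v, w v } :=
    ⟨wt, hwt0, hcov, htot.symm⟩
  have hbdd : BddBelow { t : ℝ | ∃ w : V → ℝ, (∀ v, 0 ≤ w v) ∧
      (∀ h ∈ H, 1 ≤ ∑ v, Set.indicator h w v) ∧ t = ∑ v, w v } := by
    refine ⟨0, fun t ht => ?_⟩
    obtain ⟨w', hw'0, -, rfl⟩ := ht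
    exact Finset.sum_nonneg fun v _ => hw'0 v
  exact csInf_le hbdd hmem

end Cover

theorem tree_fracCover_of_pp_property {V : Type*} [Fintype V]
    (G : SimpleGraph V) (hG : G.IsTree)
    (p d : ℕ) (hp : 2 ≤ p) (hd : 1 ≤ d)
    (H : Finset (Set V)) (hne : ∀ h ∈ H, h.Nonempty)
    (hcomp : ∀ h ∈ H, Nat.card (G.induce h).ConnectedComponent ≤ d)
    (hcard : p ≤ H.card)
    (hprop : VertexPQProperty H p p) :
    vertexFracCoverNum H < ((p : ℝ) * d) ^ (1 / ((p : ℝ) - 1)) + 1 := by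
  classical
  set x : ℝ := ((p : ℝ) * d) ^ (1 / ((p : ℝ) - 1)) with hxdef
  have hpd1 : (1:ℝ) ≤ (p:ℝ) * d := by
    have h1 : (2:ℝ) ≤ (p:ℝ) := by exact_mod_cast hp
    have h2 : (1:ℝ) ≤ (d:ℝ) := by exact_mod_cast hd
    nlinarith
  have hexp : (0:ℝ) ≤ 1 / ((p:ℝ) - 1) := by
    have h1 : (2:ℝ) ≤ (p:ℝ) := by exact_mod_cast hp
    apply div_nonneg zero_le_one
    linarith
  have hx1 : (1:ℝ) ≤ x := by
    have := Real.rpow_le_rpow zero_le_one hpd1 hexp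
    rwa [Real.one_rpow] at this
  have hxpos : (0:ℝ) < x := lt_of_lt_of_le zero_lt_one hx1
  have hH0 : 0 < H.card := lt_of_lt_of_le (by omega) hcard
  obtain ⟨h₀, hh₀⟩ := Finset.card_pos.mp hH0
  obtain ⟨v₀, -⟩ := hne h₀ hh₀
  have hmatch : ∀ y : Set V → ℝ, (∀ h, 0 ≤ y h) →
      (∀ v : V, ∑ h ∈ H.filter (fun h => v ∈ h), y h ≤ 1) → ∑ h ∈ H, y h ≤ x :=
    fun y hy hz => matching_le hG v₀ hp hd hcomp hcard hprop y hy hz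
  have hkey := hull_key ⟨h₀, hh₀⟩ v₀ hxpos hmatch
  have hle : vertexFracCoverNum H ≤ x := frac_le_of_hull hxpos hkey
  linarith
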